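/- arXiv:1706.04150 — 2 statements merged into one kernel-verified Lean document; each statement's English description precedes it below -/
import Mathlib

section
/- Let P(λ) = ∑_{i=0}^{k} A_i λ^i be an n×n complex matrix polynomial of odd degree k ≥ 3. Then for every λ ∈ ℂ: ℛ_P(λ) · (S R Δ(λ)) = S R (e_k ⊗ I_n) · P(λ), where e_k ⊗ I_n is the kn×n matrix whose last n×n block is I_n and whose remaining blocks are zero. -/
open Finset Matrix

noncomputable section
namespace MPoly

abbrev Mat (n : ℕ) := Matrix (Fin n) (Fin n) ℂ

variable {n : ℕ}

/-- Euclidean norm of a complex vector. -/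
def vecNorm {ι : Type*} [Fintype ι] (x : ι → ℂ) : ℝ :=
  Real.sqrt (∑ i, ‖x i‖ ^ 2)

/-- Spectral norm (operator norm induced by the Euclidean vector norm). -/
def specNorm {ι κ : Type*} [Fintype ι] [Fintype κ] [DecidableEq κ] (M : Matrix ι κ ℂ) : ℝ :=
  ‖LinearMap.toContinuousLinearMap (Matrix.toEuclideanLin M)‖

/-- Evaluation of the matrix polynomial `P(λ) = ∑_{i=0}^k A_i λ^i`. -/
def Peval (k : ℕ) (A : ℕ → Mat n) (lam : ℂ) : Mat n :=
  ∑ i ∈ Finset.range (k + 1), lam ^ i • A i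

/-- Derivative `P′(λ) = ∑_{i=1}^k i A_i λ^{i-1}`. -/
def Pderiv (k : ℕ) (A : ℕ → Mat n) (lam : ℂ) : Mat n :=
  ∑ i ∈ Finset.range k, (((i : ℂ) + 1) * lam ^ i) • A (i + 1)

/-- `i`-th Horner shift `P_i(λ) = ∑_{j=0}^i λ^j A_{k-i+j}`. -/
def horner (k : ℕ) (A : ℕ → Mat n) (i : ℕ) (lam : ℂ) : Mat n :=
  ∑ j ∈ Finset.range (i + 1), lam ^ j • A (k - i + j)

/-- `P^i(λ) = ∑_{j=0}^i λ^j A_j`. -/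
def lowPart (A : ℕ → Mat n) (i : ℕ) (lam : ℂ) : Mat n :=
  ∑ j ∈ Finset.range (i + 1), lam ^ j • A j

/-- `q`-th (0-indexed) block of `Δ(λ)`. -/
def DeltaBlock (k : ℕ) (A : ℕ → Mat n) (lam : ℂ) (q : ℕ) : Mat n :=
  if q % 2 = 0 then lam ^ ((k - 1 - q) / 2) • (1 : Mat n)
  else lam ^ ((k - q) / 2) • horner k A q lam

/-- The kn×n matrix `Δ(λ)`. -/
def Delta (k : ℕ) (A : ℕ → Mat n) (lam : ℂ) : Matrix (Fin k × Fin n) (Fin n) ℂ :=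
  Matrix.of fun p b => DeltaBlock k A lam p.1.1 p.2 b

/-- The n×kn block-transpose `Δᴮ(λ)`. -/
def DeltaB (k : ℕ) (A : ℕ → Mat n) (lam : ℂ) : Matrix (Fin n) (Fin k × Fin n) ℂ :=
  Matrix.of fun a q => DeltaBlock k A lam q.1.1 a q.2

/-- (0-indexed) blocks of `𝒯₁`. -/
def T1Block (k : ℕ) (A : ℕ → Mat n) (i j : ℕ) : Mat n :=
  if i = j then (if i % 2 = 0 then A (k - i) else 0)
  else if (j = i + 1 ∧ i % 2 = 1) ∨ (i = j + 1 ∧ j % 2 = 1) then 1 else 0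

/-- (0-indexed) blocks of `𝒯₀`. -/
def T0Block (k : ℕ) (A : ℕ → Mat n) (i j : ℕ) : Mat n :=
  if i = j then (if i % 2 = 0 then -(A (k - i - 1)) else 0)
  else if (j = i + 1 ∧ i % 2 = 0) ∨ (i = j + 1 ∧ j % 2 = 0) then 1 else 0

/-- `𝒯₁`. -/
def TT1 (k : ℕ) (A : ℕ → Mat n) : Matrix (Fin k × Fin n) (Fin k × Fin n) ℂ :=
  Matrix.of fun p q => T1Block k A p.1.1 q.1.1 p.2 q.2

/-- `𝒯₀`. -/
def TT0 (k : ℕ) (A : ℕ → Mat n) : Matrix (Fin k × Fin n) (Fin k × Fin n) ℂ :=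
  Matrix.of fun p q => T0Block k A p.1.1 q.1.1 p.2 q.2

/-- The pencil `𝒯_P(λ) = λ𝒯₁ - 𝒯₀`. -/
def Tpencil (k : ℕ) (A : ℕ → Mat n) (lam : ℂ) : Matrix (Fin k × Fin n) (Fin k × Fin n) ℂ :=
  lam • TT1 k A - TT0 k A

/-- Block anti-diagonal flip matrix `R`. -/
def Rmat (k n : ℕ) : Matrix (Fin k × Fin n) (Fin k × Fin n) ℂ :=
  Matrix.of fun p q => if p.1.1 + q.1.1 = k - 1 ∧ p.2 = q.2 then 1 else 0

/-- Block-diagonal sign matrix `S` (block `i` (1-indexed) is `-I` iff `i ≡ 0,1 mod 4`). -/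
def Smat (k n : ℕ) : Matrix (Fin k × Fin n) (Fin k × Fin n) ℂ :=
  Matrix.of fun p q =>
    if p = q then (if (p.1.1 + 1) % 4 = 0 ∨ (p.1.1 + 1) % 4 = 1 then -1 else 1) else 0

/-- `D = diag(I, -I, I, …, I)`. -/
def Dmat (k n : ℕ) : Matrix (Fin k × Fin n) (Fin k × Fin n) ℂ :=
  Matrix.of fun p q => if p = q then ((-1 : ℂ)) ^ p.1.1 else 0

/-- `e_k ⊗ I_n`: kn×n matrix with last block `I_n`. -/
def ekI (k n : ℕ) : Matrix (Fin k × Fin n) (Fin n) ℂ :=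
  Matrix.of fun p b => if p.1.1 = k - 1 ∧ p.2 = b then 1 else 0

/-- The pencil `ℛ_P(λ) = S R 𝒯_P(λ) R S`. -/
def Rpencil (k : ℕ) (A : ℕ → Mat n) (lam : ℂ) : Matrix (Fin k × Fin n) (Fin k × Fin n) ℂ :=
  Smat k n * Rmat k n * Tpencil k A lam * Rmat k n * Smat k n

/-- `max_{i=0:k} ‖A_i‖₂`. -/
def maxA (k : ℕ) (A : ℕ → Mat n) : ℝ :=
  (Finset.range (k + 1)).sup' Finset.nonempty_range_add_one fun i => specNorm (A i)

/-- `max_{i=0:k} max{1, ‖A_i‖₂}`. -/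
def maxA1 (k : ℕ) (A : ℕ → Mat n) : ℝ :=
  (Finset.range (k + 1)).sup' Finset.nonempty_range_add_one fun i => max 1 (specNorm (A i))

/-- The quantity `d₁(δ)`. -/
def d1 (k : ℕ) (δ : ℂ) : ℝ :=
  ∑ r ∈ Finset.range ((k - 1) / 2 + 1), ‖δ‖ ^ (2 * r)
    + ∑ r ∈ Finset.Icc 1 ((k - 1) / 2),
        ((k : ℝ) - 2 * r + 1) * ∑ s ∈ Finset.Icc r (k - r), ‖δ‖ ^ (2 * s)

/-- `ρ₁`. -/
def rho1 (k : ℕ) (A : ℕ → Mat n) : ℝ :=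
  ((Finset.range (k + 1)).sup' Finset.nonempty_range_add_one fun i => max 1 (specNorm (A i) ^ 3))
    / min (specNorm (A k)) (specNorm (A 0))

/-- `ρ₂`. -/
def rho2 (k : ℕ) (A : ℕ → Mat n) : ℝ :=
  min (max 1 (specNorm (A k))) (max 1 (specNorm (A 0))) / maxA k A

/-- `ρ′`. -/
def rho' (k : ℕ) (A : ℕ → Mat n) : ℝ :=
  ((Finset.range (k + 1)).sup' Finset.nonempty_range_add_one fun i => max 1 (specNorm (A i) ^ 2))
    / min (specNorm (A k)) (specNorm (A 0))

/-- `det P(λ)` as a polynomial in `λ`. -/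
def detPoly (k : ℕ) (A : ℕ → Mat n) : Polynomial ℂ :=
  (∑ i ∈ Finset.range (k + 1), (Polynomial.X : Polynomial ℂ) ^ i • (A i).map Polynomial.C).det

/-- `L₁¹` (leading coefficient of `D₁(λ,P)`). -/
def D1L1 (k : ℕ) (A : ℕ → Mat n) : Matrix (Fin k × Fin n) (Fin k × Fin n) ℂ :=
  Matrix.of fun p q =>
    (if p.1.1 = 0 ∧ q.1.1 = 0 then A k
     else if 1 ≤ p.1.1 ∧ 1 ≤ q.1.1 ∧ p.1.1 + q.1.1 ≤ k then -(A (k - p.1.1 - q.1.1))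
     else 0) p.2 q.2

/-- `L₀¹` (trailing coefficient of `D₁(λ,P)`). -/
def D1L0 (k : ℕ) (A : ℕ → Mat n) : Matrix (Fin k × Fin n) (Fin k × Fin n) ℂ :=
  Matrix.of fun p q =>
    (if p.1.1 + q.1.1 + 1 ≤ k then -(A (k - 1 - p.1.1 - q.1.1)) else 0) p.2 q.2

/-- `L₁ᵏ` (leading coefficient of `D_k(λ,P)`). -/
def DkL1 (k : ℕ) (A : ℕ → Mat n) : Matrix (Fin k × Fin n) (Fin k × Fin n) ℂ :=
  Matrix.of fun p q =>
    (if k - 1 ≤ p.1.1 + q.1.1 then A (2 * k - 1 - p.1.1 - q.1.1) else 0) p.2 q.2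

/-- `L₀ᵏ` (trailing coefficient of `D_k(λ,P)`). -/
def DkL0 (k : ℕ) (A : ℕ → Mat n) : Matrix (Fin k × Fin n) (Fin k × Fin n) ℂ :=
  Matrix.of fun p q =>
    (if p.1.1 = k - 1 ∧ q.1.1 = k - 1 then -(A 0)
     else if p.1.1 ≤ k - 2 ∧ q.1.1 ≤ k - 2 ∧ k - 2 ≤ p.1.1 + q.1.1
       then A (2 * k - 2 - p.1.1 - q.1.1)
     else 0) p.2 q.2

/-- `X₁` (leading coefficient of the first companion form `C₁(λ)`). -/
def C1X (k : ℕ) (A : ℕ → Mat n) : Matrix (Fin k × Fin n) (Fin k × Fin n) ℂ :=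
  Matrix.of fun p q =>
    (if p.1 = q.1 then (if p.1.1 = 0 then A k else (1 : Mat n)) else 0) p.2 q.2

/-- `Y₁` (trailing coefficient of the first companion form `C₁(λ)`). -/
def C1Y (k : ℕ) (A : ℕ → Mat n) : Matrix (Fin k × Fin n) (Fin k × Fin n) ℂ :=
  Matrix.of fun p q =>
    (if p.1.1 = 0 then -(A (k - 1 - q.1.1))
     else if p.1.1 = q.1.1 + 1 then (1 : Mat n) else 0) p.2 q.2


section Aux

variable {k : ℕ}

lemma horner_succ (A : ℕ → Mat n) (lam : ℂ) {i : ℕ} (hi : i < k) :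
    horner k A (i + 1) lam = lam • horner k A i lam + A (k - (i + 1)) := by
  unfold horner
  rw [Finset.sum_range_succ']
  congr 1
  · rw [Finset.smul_sum]
    apply Finset.sum_congr rfl
    intro j hj
    rw [smul_smul, ← pow_succ', show k - (i + 1) + (j + 1) = k - i + j by omega]
  · simp

lemma horner_zero (A : ℕ → Mat n) (lam : ℂ) : horner k A 0 lam = A k := by
  simp [horner]

lemma horner_top (A : ℕ → Mat n) (lam : ℂ) : horner k A k lam = Peval k A lam := by
  simp [horner, Peval]

lemma T1Block_diag_even (A : ℕ → Mat n) {i : ℕ} (h : i % 2 = 0) :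
    T1Block k A i i = A (k - i) := by
  unfold T1Block; rw [if_pos rfl, if_pos h]

lemma T1Block_diag_odd (A : ℕ → Mat n) {i : ℕ} (h : i % 2 = 1) :
    T1Block k A i i = 0 := by
  unfold T1Block; rw [if_pos rfl, if_neg (by omega)]

lemma T1Block_right_odd (A : ℕ → Mat n) {i : ℕ} (h : i % 2 = 1) :
    T1Block k A i (i + 1) = 1 := by
  unfold T1Block; rw [if_neg (by omega), if_pos (Or.inl ⟨rfl, h⟩)]

lemma T1Block_right_even (A : ℕ → Mat n) {i : ℕ} (h : i % 2 = 0) :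
    T1Block k A i (i + 1) = 0 := by
  unfold T1Block; rw [if_neg (by omega), if_neg (by omega)]

lemma T1Block_left_even (A : ℕ → Mat n) {i : ℕ} (h : i % 2 = 0) (h1 : 1 ≤ i) :
    T1Block k A i (i - 1) = 1 := by
  unfold T1Block; rw [if_neg (by omega), if_pos (Or.inr ⟨by omega, by omega⟩)]

lemma T1Block_left_odd (A : ℕ → Mat n) {i : ℕ} (h : i % 2 = 1) (h1 : 1 ≤ i) :
    T1Block k A i (i - 1) = 0 := by
  unfold T1Block; rw [if_neg (by omega), if_neg (by omega)]

lemma T0Block_diag_even (A : ℕ → Mat n) {i : ℕ} (h : i % 2 = 0) :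
    T0Block k A i i = -(A (k - i - 1)) := by
  unfold T0Block; rw [if_pos rfl, if_pos h]

lemma T0Block_diag_odd (A : ℕ → Mat n) {i : ℕ} (h : i % 2 = 1) :
    T0Block k A i i = 0 := by
  unfold T0Block; rw [if_pos rfl, if_neg (by omega)]

lemma T0Block_right_even (A : ℕ → Mat n) {i : ℕ} (h : i % 2 = 0) :
    T0Block k A i (i + 1) = 1 := by
  unfold T0Block; rw [if_neg (by omega), if_pos (Or.inl ⟨rfl, h⟩)]

lemma T0Block_right_odd (A : ℕ → Mat n) {i : ℕ} (h : i % 2 = 1) :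
    T0Block k A i (i + 1) = 0 := by
  unfold T0Block; rw [if_neg (by omega), if_neg (by omega)]

lemma T0Block_left_odd (A : ℕ → Mat n) {i : ℕ} (h : i % 2 = 1) (h1 : 1 ≤ i) :
    T0Block k A i (i - 1) = 1 := by
  unfold T0Block; rw [if_neg (by omega), if_pos (Or.inr ⟨by omega, by omega⟩)]

lemma T0Block_left_even (A : ℕ → Mat n) {i : ℕ} (h : i % 2 = 0) (h1 : 1 ≤ i) :
    T0Block k A i (i - 1) = 0 := by
  unfold T0Block; rw [if_neg (by omega), if_neg (by omega)]

lemma DeltaBlock_even (A : ℕ → Mat n) (lam : ℂ) {q : ℕ} (h : q % 2 = 0) :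
    DeltaBlock k A lam q = lam ^ ((k - 1 - q) / 2) • (1 : Mat n) := by
  unfold DeltaBlock; rw [if_pos h]

lemma DeltaBlock_odd (A : ℕ → Mat n) (lam : ℂ) {q : ℕ} (h : q % 2 = 1) :
    DeltaBlock k A lam q = lam ^ ((k - q) / 2) • horner k A q lam := by
  unfold DeltaBlock; rw [if_neg (by omega)]

lemma Smat_sq : Smat k n * Smat k n = 1 := by
  ext p q
  rw [Matrix.mul_apply, Finset.sum_eq_single p]
  · by_cases h : p = q
    · subst h
      simp only [Smat, Matrix.of_apply, if_pos rfl, Matrix.one_apply_eq]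
      split_ifs <;> norm_num
    · simp [Smat, h, Matrix.one_apply_ne h]
  · intro b _ hb
    simp [Smat, (Ne.symm hb)]
  · simp

lemma Rmat_sq (hk1 : 1 ≤ k) : Rmat k n * Rmat k n = 1 := by
  ext p q
  have hp : p.1.1 < k := p.1.2
  have hq : q.1.1 < k := q.1.2
  rw [Matrix.mul_apply,
    Finset.sum_eq_single ((⟨⟨k - 1 - p.1.1, by omega⟩, p.2⟩ : Fin k × Fin n))]
  · show (if p.1.1 + (k - 1 - p.1.1) = k - 1 ∧ p.2 = p.2 then (1 : ℂ) else 0)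
        * (if (k - 1 - p.1.1) + q.1.1 = k - 1 ∧ p.2 = q.2 then (1 : ℂ) else 0) = _
    rw [if_pos ⟨by omega, rfl⟩, one_mul]
    by_cases h : p = q
    · subst h
      rw [if_pos ⟨by omega, rfl⟩, Matrix.one_apply_eq]
    · rw [Matrix.one_apply_ne h, if_neg]
      rintro ⟨h1, h2⟩
      exact h (Prod.ext (Fin.ext (by omega)) h2)
  · rintro ⟨b1, b2⟩ _ hb
    show (if p.1.1 + b1.1 = k - 1 ∧ p.2 = b2 then (1 : ℂ) else 0) * _ = 0
    by_cases hcond : p.1.1 + b1.1 = k - 1 ∧ p.2 = b2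
    · obtain ⟨h1, h2⟩ := hcond
      refine absurd ?_ hb
      refine Prod.ext (Fin.ext ?_) h2.symm
      show b1.1 = k - 1 - p.1.1
      omega
    · rw [if_neg hcond, zero_mul]
  · simp

lemma blockSum (hk : Odd k) (hk3 : 3 ≤ k) (A : ℕ → Mat n) (lam : ℂ) {i : ℕ} (hi : i < k) :
    ∑ q ∈ Finset.range k,
        (lam • T1Block k A i q - T0Block k A i q) * DeltaBlock k A lam q
      = if i = k - 1 then Peval k A lam else 0 := by
  have hk2 : k % 2 = 1 := Nat.odd_iff.mp hk
  set F : ℕ → Mat n := fun q =>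
    (lam • T1Block k A i q - T0Block k A i q) * DeltaBlock k A lam q with hF
  have hvan : ∀ q, q ≠ i - 1 → q ≠ i → q ≠ i + 1 → F q = 0 := by
    intro q h1 h2 h3
    have e1 : T1Block k A i q = 0 := by
      unfold T1Block
      rw [if_neg (Ne.symm h2), if_neg (by omega)]
    have e0 : T0Block k A i q = 0 := by
      unfold T0Block
      rw [if_neg (Ne.symm h2), if_neg (by omega)]
    show (lam • T1Block k A i q - T0Block k A i q) * DeltaBlock k A lam q = 0
    rw [e1, e0, smul_zero, sub_zero, Matrix.zero_mul]
  rcases Nat.even_or_odd i with hev | hod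
  · have hie : i % 2 = 0 := Nat.even_iff.mp hev
    by_cases h0 : i = 0
    · -- first block row
      subst h0
      rw [if_neg (by omega)]
      rw [← Finset.sum_subset (show ({0, 1} : Finset ℕ) ⊆ Finset.range k by
            intro x; simp; omega)
          (fun x hx hnx => hvan x (by simp only [Finset.mem_insert, Finset.mem_singleton, not_or] at hnx; omega) (by simp only [Finset.mem_insert, Finset.mem_singleton, not_or] at hnx; omega)
            (by simp only [Finset.mem_insert, Finset.mem_singleton, not_or] at hnx; omega))]
      rw [Finset.sum_insert (by simp), Finset.sum_singleton]
      have e0 : F 0 = lam ^ ((k - 1) / 2) • (lam • A k + A (k - 1)) := by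
        show (lam • T1Block k A 0 0 - T0Block k A 0 0) * DeltaBlock k A lam 0 = _
        rw [T1Block_diag_even A rfl, T0Block_diag_even A rfl, DeltaBlock_even A lam rfl,
          sub_neg_eq_add, Matrix.mul_smul, Matrix.mul_one]
        simp only [Nat.sub_zero]
      have e1 : F 1 = -(lam ^ ((k - 1) / 2) • horner k A 1 lam) := by
        show (lam • T1Block k A 0 1 - T0Block k A 0 1) * DeltaBlock k A lam 1 = _
        rw [show (1 : ℕ) = 0 + 1 from rfl, T1Block_right_even A rfl, T0Block_right_even A rfl,
          DeltaBlock_odd A lam rfl, smul_zero, zero_sub, Matrix.neg_mul, Matrix.one_mul]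
      rw [e0, e1, horner_succ A lam (show 0 < k by omega), horner_zero]
      rw [show k - (0 + 1) = k - 1 by omega]
      module
    · by_cases hl : i = k - 1
      · -- last block row
        rw [if_pos hl]
        have h1 : 1 ≤ i := by omega
        rw [← Finset.sum_subset (show ({i - 1, i} : Finset ℕ) ⊆ Finset.range k by
              intro x; simp; omega)
            (fun x hx hnx => hvan x (by simp only [Finset.mem_insert, Finset.mem_singleton, not_or] at hnx; omega) (by simp only [Finset.mem_insert, Finset.mem_singleton, not_or] at hnx; omega)
              (by simp only [Finset.mem_range] at hx; simp only [Finset.mem_insert, Finset.mem_singleton, not_or] at hnx; omega))]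
        rw [Finset.sum_insert (by simp only [Finset.mem_insert, Finset.mem_singleton]; omega), Finset.sum_singleton]
        have e0 : F (i - 1) = lam • (lam ^ 1 • horner k A (i - 1) lam) := by
          show (lam • T1Block k A i (i - 1) - T0Block k A i (i - 1))
              * DeltaBlock k A lam (i - 1) = _
          rw [T1Block_left_even A hie h1, T0Block_left_even A hie h1,
            DeltaBlock_odd A lam (by omega), sub_zero, Matrix.smul_mul, Matrix.one_mul,
            show (k - (i - 1)) / 2 = 1 by omega]
        have e1 : F i = lam • A 1 + A 0 := by
          show (lam • T1Block k A i i - T0Block k A i i) * DeltaBlock k A lam i = _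
          rw [T1Block_diag_even A hie, T0Block_diag_even A hie, DeltaBlock_even A lam hie,
            sub_neg_eq_add, show (k - 1 - i) / 2 = 0 by omega, pow_zero, one_smul,
            Matrix.mul_one, show k - i = 1 by omega, show 1 - 1 = 0 by omega]
        have r1 : Peval k A lam = lam • (lam • horner k A (i - 1) lam + A 1) + A 0 := by
          rw [← horner_top A lam]
          have h5 : k = (i - 1 + 1) + 1 := by omega
          calc horner k A k lam = horner k A ((i - 1 + 1) + 1) lam := by rw [h5]
            _ = lam • horner k A (i - 1 + 1) lam + A (k - (i - 1 + 1 + 1)) :=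
                horner_succ A lam (by omega)
            _ = lam • (lam • horner k A (i - 1) lam + A (k - (i - 1 + 1)))
                  + A (k - (i - 1 + 1 + 1)) := by rw [horner_succ A lam (by omega)]
            _ = _ := by
                rw [show k - (i - 1 + 1) = 1 by omega, show k - (i - 1 + 1 + 1) = 0 by omega]
        rw [e0, e1, r1]
        module
      · -- interior even block row
        have h1 : 1 ≤ i := by omega
        have h2 : i + 1 < k := by omega
        rw [if_neg hl]
        rw [← Finset.sum_subset (show ({i - 1, i, i + 1} : Finset ℕ) ⊆ Finset.range k by
              intro x; simp; omega)
            (fun x hx hnx => hvan x (by simp only [Finset.mem_insert, Finset.mem_singleton, not_or] at hnx; omega) (by simp only [Finset.mem_insert, Finset.mem_singleton, not_or] at hnx; omega)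
              (by simp only [Finset.mem_insert, Finset.mem_singleton, not_or] at hnx; omega))]
        rw [Finset.sum_insert (by simp only [Finset.mem_insert, Finset.mem_singleton]; omega), Finset.sum_insert (by simp only [Finset.mem_insert, Finset.mem_singleton]; omega),
          Finset.sum_singleton]
        set e := (k - 1 - i) / 2 with he
        have ea : F (i - 1) = lam • (lam ^ (e + 1) • horner k A (i - 1) lam) := by
          show (lam • T1Block k A i (i - 1) - T0Block k A i (i - 1))
              * DeltaBlock k A lam (i - 1) = _
          rw [T1Block_left_even A hie h1, T0Block_left_even A hie h1,
            DeltaBlock_odd A lam (by omega), sub_zero, Matrix.smul_mul, Matrix.one_mul,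
            show (k - (i - 1)) / 2 = e + 1 by omega]
        have eb : F i = lam ^ e • (lam • A (k - i) + A (k - i - 1)) := by
          show (lam • T1Block k A i i - T0Block k A i i) * DeltaBlock k A lam i = _
          rw [T1Block_diag_even A hie, T0Block_diag_even A hie, DeltaBlock_even A lam hie,
            sub_neg_eq_add, Matrix.mul_smul, Matrix.mul_one]
        have ec : F (i + 1) = -(lam ^ e • horner k A (i + 1) lam) := by
          show (lam • T1Block k A i (i + 1) - T0Block k A i (i + 1))
              * DeltaBlock k A lam (i + 1) = _
          rw [T1Block_right_even A hie, T0Block_right_even A hie,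
            DeltaBlock_odd A lam (by omega), smul_zero, zero_sub, Matrix.neg_mul,
            Matrix.one_mul, show (k - (i + 1)) / 2 = e by omega]
        have r2 : horner k A i lam = lam • horner k A (i - 1) lam + A (k - i) := by
          have h5 : i = i - 1 + 1 := by omega
          calc horner k A i lam = horner k A (i - 1 + 1) lam := by rw [← h5]
            _ = lam • horner k A (i - 1) lam + A (k - (i - 1 + 1)) :=
                horner_succ A lam (by omega)
            _ = _ := by rw [show k - (i - 1 + 1) = k - i by omega]
        rw [ea, eb, ec, horner_succ A lam (show i < k by omega), r2,
          show k - (i + 1) = k - i - 1 by omega]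
        module
  · -- odd block row
    have hie : i % 2 = 1 := Nat.odd_iff.mp hod
    have h1 : 1 ≤ i := by omega
    have h2 : i + 1 < k := by omega
    rw [if_neg (by omega)]
    rw [← Finset.sum_subset (show ({i - 1, i, i + 1} : Finset ℕ) ⊆ Finset.range k by
          intro x; simp; omega)
        (fun x hx hnx => hvan x (by simp only [Finset.mem_insert, Finset.mem_singleton, not_or] at hnx; omega) (by simp only [Finset.mem_insert, Finset.mem_singleton, not_or] at hnx; omega)
          (by simp only [Finset.mem_insert, Finset.mem_singleton, not_or] at hnx; omega))]
    rw [Finset.sum_insert (by simp only [Finset.mem_insert, Finset.mem_singleton]; omega), Finset.sum_insert (by simp only [Finset.mem_insert, Finset.mem_singleton]; omega),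
      Finset.sum_singleton]
    have ea : F (i - 1) = -(lam ^ ((k - 1 - (i + 1)) / 2 + 1) • (1 : Mat n)) := by
      show (lam • T1Block k A i (i - 1) - T0Block k A i (i - 1))
          * DeltaBlock k A lam (i - 1) = _
      rw [T1Block_left_odd A hie h1, T0Block_left_odd A hie h1, smul_zero, zero_sub,
        Matrix.neg_mul, Matrix.one_mul, DeltaBlock_even A lam (by omega),
        show (k - 1 - (i - 1)) / 2 = (k - 1 - (i + 1)) / 2 + 1 by omega]
    have eb : F i = 0 := by
      show (lam • T1Block k A i i - T0Block k A i i) * DeltaBlock k A lam i = _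
      rw [T1Block_diag_odd A hie, T0Block_diag_odd A hie, smul_zero, sub_zero,
        Matrix.zero_mul]
    have ec : F (i + 1) = lam • (lam ^ ((k - 1 - (i + 1)) / 2) • (1 : Mat n)) := by
      show (lam • T1Block k A i (i + 1) - T0Block k A i (i + 1))
          * DeltaBlock k A lam (i + 1) = _
      rw [T1Block_right_odd A hie, T0Block_right_odd A hie, sub_zero, Matrix.smul_mul,
        Matrix.one_mul, DeltaBlock_even A lam (by omega)]
    rw [ea, eb, ec]
    module

lemma TD (hk : Odd k) (hk3 : 3 ≤ k) (A : ℕ → Mat n) (lam : ℂ) :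
    Tpencil k A lam * Delta k A lam = ekI k n * Peval k A lam := by
  ext pa b
  obtain ⟨p, a⟩ := pa
  rw [Matrix.mul_apply, Matrix.mul_apply]
  have hR : ∑ c, ekI k n (p, a) c * Peval k A lam c b
      = (if (p : ℕ) = k - 1 then Peval k A lam else 0) a b := by
    by_cases h : (p : ℕ) = k - 1
    · rw [if_pos h, Finset.sum_eq_single a]
      · simp [ekI, h]
      · intro c _ hc
        simp [ekI, Ne.symm hc]
      · simp
    · simp [ekI, h]
  rw [hR]
  have step : ∀ qc : Fin k × Fin n,
      Tpencil k A lam (p, a) qc * Delta k A lam qc b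
        = (lam • T1Block k A (p : ℕ) (qc.1 : ℕ) - T0Block k A (p : ℕ) (qc.1 : ℕ)) a qc.2
            * DeltaBlock k A lam (qc.1 : ℕ) qc.2 b := by
    rintro ⟨q, c⟩
    simp [Tpencil, TT1, TT0, Delta, Matrix.sub_apply]
  rw [Finset.sum_congr rfl (fun qc _ => step qc), Fintype.sum_prod_type]
  have inner : ∀ q : Fin k,
      (∑ c, (lam • T1Block k A (p : ℕ) (q : ℕ) - T0Block k A (p : ℕ) (q : ℕ)) a c
          * DeltaBlock k A lam (q : ℕ) c b)
        = ((lam • T1Block k A (p : ℕ) (q : ℕ) - T0Block k A (p : ℕ) (q : ℕ))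
            * DeltaBlock k A lam (q : ℕ)) a b := fun q => (Matrix.mul_apply).symm
  rw [Finset.sum_congr rfl (fun q _ => inner q)]
  have key := blockSum (n := n) hk hk3 A lam (i := (p : ℕ)) p.2
  calc ∑ q : Fin k, ((lam • T1Block k A (p : ℕ) (q : ℕ) - T0Block k A (p : ℕ) (q : ℕ))
          * DeltaBlock k A lam (q : ℕ)) a b
      = (∑ q ∈ Finset.range k, (lam • T1Block k A (p : ℕ) q - T0Block k A (p : ℕ) q)
          * DeltaBlock k A lam q) a b := by
        rw [Fin.sum_univ_eq_sum_range (fun q =>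
          ((lam • T1Block k A (p : ℕ) q - T0Block k A (p : ℕ) q)
            * DeltaBlock k A lam q) a b) k]
        exact (Matrix.sum_apply a b (Finset.range k) _).symm
    _ = _ := by rw [key]

end Aux


theorem stmt_7 {n k : ℕ} (hk : Odd k) (hk3 : 3 ≤ k) (A : ℕ → Mat n) (hAk : A k ≠ 0)
    (lam : ℂ) :
    Rpencil k A lam * (Smat k n * Rmat k n * Delta k A lam)
      = Smat k n * Rmat k n * ekI k n * Peval k A lam := by
  have h1 : Smat k n * Smat k n = 1 := Smat_sq
  have h2 : Rmat k n * Rmat k n = 1 := Rmat_sq (by omega)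
  have h3 := TD (n := n) hk hk3 A lam
  unfold Rpencil
  simp only [Matrix.mul_assoc]
  rw [show Smat k n * (Rmat k n * Delta k A lam)
      = Smat k n * (Rmat k n * Delta k A lam) from rfl]
  rw [← Matrix.mul_assoc (Smat k n) (Smat k n), h1, Matrix.one_mul,
    ← Matrix.mul_assoc (Rmat k n) (Rmat k n), h2, Matrix.one_mul, h3]


end MPoly
end
end

section
/- Let P(λ) = ∑_{i=0}^{k} A_i λ^i be an n×n complex matrix polynomial of odd degree k ≥ 3 and write 𝒯_P(λ) = λ𝒯₁ − 𝒯₀. Then ‖𝒯₁‖₂ ≤ 2 · max_{i=0,…,k} max{1, ‖A_i‖₂} and ‖𝒯₀‖₂ ≤ 2 · max_{i=0,…,k} max{1, ‖A_i‖₂}. -/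
open Finset Matrix

noncomputable section
namespace MPoly

variable {n : ℕ}

variable {ι κ : Type*} [Fintype ι] [Fintype κ] [DecidableEq κ]

lemma sumSq_mulVec_le (M : Matrix ι κ ℂ) {c : ℝ} (hM : specNorm M ≤ c) (x : κ → ℂ) :
    ∑ i, ‖M.mulVec x i‖ ^ 2 ≤ c ^ 2 * ∑ j, ‖x j‖ ^ 2 := by
  have h := (LinearMap.toContinuousLinearMap (Matrix.toEuclideanLin M)).le_opNorm
    ((WithLp.equiv 2 (κ → ℂ)).symm x)
  rw [LinearMap.coe_toContinuousLinearMap'] at h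
  rw [WithLp.equiv_symm_apply, Matrix.toEuclideanLin_apply_piLp_toLp] at h
  rw [EuclideanSpace.norm_eq, EuclideanSpace.norm_eq] at h
  simp only [PiLp.toLp_apply] at h
  have h2 : Real.sqrt (∑ i, ‖M.mulVec x i‖ ^ 2) ≤ c * Real.sqrt (∑ j, ‖x j‖ ^ 2) := by
    refine h.trans (mul_le_mul_of_nonneg_right hM (Real.sqrt_nonneg _))
  have hc : 0 ≤ c := le_trans (norm_nonneg _) hM
  have := sq_le_sq' (by nlinarith [Real.sqrt_nonneg (∑ i, ‖M.mulVec x i‖ ^ 2)]) h2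
  calc ∑ i, ‖M.mulVec x i‖ ^ 2
      = Real.sqrt (∑ i, ‖M.mulVec x i‖ ^ 2) ^ 2 := by
        rw [Real.sq_sqrt]; positivity
    _ ≤ (c * Real.sqrt (∑ j, ‖x j‖ ^ 2)) ^ 2 := by
        apply pow_le_pow_left₀ (Real.sqrt_nonneg _) h2
    _ = c ^ 2 * ∑ j, ‖x j‖ ^ 2 := by
        rw [mul_pow, Real.sq_sqrt]; positivity

lemma specNorm_le_of_mulVec (M : Matrix ι κ ℂ) {c : ℝ} (hc : 0 ≤ c)
    (h : ∀ x : κ → ℂ, ∑ i, ‖M.mulVec x i‖ ^ 2 ≤ c ^ 2 * ∑ j, ‖x j‖ ^ 2) :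
    specNorm M ≤ c := by
  apply ContinuousLinearMap.opNorm_le_bound _ hc
  intro x
  rw [LinearMap.coe_toContinuousLinearMap']
  rw [Matrix.toEuclideanLin_apply, EuclideanSpace.norm_eq, EuclideanSpace.norm_eq]
  simp only [PiLp.toLp_apply]
  have := h ((WithLp.equiv 2 (κ → ℂ)) x)
  calc Real.sqrt (∑ i, ‖M.mulVec ((WithLp.equiv 2 (κ → ℂ)) x) i‖ ^ 2)
      ≤ Real.sqrt (c ^ 2 * ∑ j, ‖((WithLp.equiv 2 (κ → ℂ)) x) j‖ ^ 2) :=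
        Real.sqrt_le_sqrt this
    _ = c * Real.sqrt (∑ j, ‖((WithLp.equiv 2 (κ → ℂ)) x) j‖ ^ 2) := by
        rw [Real.sqrt_mul (by positivity), Real.sqrt_sq hc]
    _ = _ := rfl

lemma specNorm_add_le {ι : Type*} [Fintype ι] [DecidableEq ι] (M N : Matrix ι ι ℂ) :
    specNorm (M + N) ≤ specNorm M + specNorm N := by
  unfold specNorm
  rw [map_add, map_add]
  exact norm_add_le _ _


lemma blockDiag_bound {k n : ℕ} (B : Fin k → Mat n) {c : ℝ} (hc : 0 ≤ c)
    (hB : ∀ i, specNorm (B i) ≤ c) :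
    specNorm (Matrix.of fun (p q : Fin k × Fin n) =>
      if p.1 = q.1 then B p.1 p.2 q.2 else 0) ≤ c := by
  apply specNorm_le_of_mulVec _ hc
  intro x
  have hmv : ∀ p : Fin k × Fin n,
      (Matrix.of fun (p q : Fin k × Fin n) =>
        if p.1 = q.1 then B p.1 p.2 q.2 else 0).mulVec x p
      = (B p.1).mulVec (fun b => x (p.1, b)) p.2 := by
    intro p
    simp only [Matrix.mulVec, dotProduct, Matrix.of_apply, Fintype.sum_prod_type]
    rw [Finset.sum_eq_single p.1]
    · simp
    · intro j _ hj
      simp [(Ne.symm hj)]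
    · simp
  calc ∑ p : Fin k × Fin n, ‖_‖ ^ 2
      = ∑ i : Fin k, ∑ a : Fin n, ‖(B i).mulVec (fun b => x (i, b)) a‖ ^ 2 := by
        rw [Fintype.sum_prod_type]
        exact Finset.sum_congr rfl fun i _ => Finset.sum_congr rfl fun a _ => by rw [hmv (i,a)]
    _ ≤ ∑ i : Fin k, c ^ 2 * ∑ b : Fin n, ‖x (i, b)‖ ^ 2 :=
        Finset.sum_le_sum fun i _ => sumSq_mulVec_le (B i) (hB i) _
    _ = c ^ 2 * ∑ q : Fin k × Fin n, ‖x q‖ ^ 2 := by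
        rw [Fintype.sum_prod_type, Finset.mul_sum]

lemma pperm_bound {ι : Type*} [Fintype ι] [DecidableEq ι] (τ : ι → ι)
    (hτ : Function.Bijective τ) (P : ι → Prop) [DecidablePred P] :
    specNorm (Matrix.of fun p q => if P p ∧ q = τ p then (1 : ℂ) else 0) ≤ 1 := by
  apply specNorm_le_of_mulVec _ zero_le_one
  intro x
  have hmv : ∀ p, (Matrix.of fun p q => if P p ∧ q = τ p then (1:ℂ) else 0).mulVec x p
      = if P p then x (τ p) else 0 := by
    intro p
    simp only [Matrix.mulVec, dotProduct, Matrix.of_apply]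
    by_cases hP : P p
    · simp [hP]
    · simp [hP]
  calc ∑ p, ‖_‖ ^ 2
      = ∑ p, ‖if P p then x (τ p) else 0‖ ^ 2 :=
        Finset.sum_congr rfl fun p _ => by rw [hmv p]
    _ ≤ ∑ p, ‖x (τ p)‖ ^ 2 := by
        refine Finset.sum_le_sum fun p _ => ?_
        split
        · exact le_refl _
        · simpa using sq_nonneg ‖x (τ p)‖
    _ = ∑ q, ‖x q‖ ^ 2 := Fintype.sum_bijective τ hτ _ _ fun p => rfl
    _ ≤ 1 ^ 2 * ∑ j, ‖x j‖ ^ 2 := by simp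

def s1fun (i : ℕ) : ℕ := if i % 2 = 1 then i + 1 else i - 1
def s0fun (k i : ℕ) : ℕ := if i % 2 = 0 then (if i + 1 = k then i else i + 1) else i - 1

lemma s1fun_lt {k i : ℕ} (hk : Odd k) (hi : i < k) : s1fun i < k := by
  obtain ⟨m, rfl⟩ := hk; unfold s1fun; split <;> omega

lemma s0fun_lt {k i : ℕ} (hk : Odd k) (hi : i < k) : s0fun k i < k := by
  obtain ⟨m, rfl⟩ := hk; unfold s0fun; split_ifs <;> omega

lemma TT1_decomp {n k : ℕ} (hk : Odd k) (A : ℕ → Mat n) :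
    TT1 k A = (Matrix.of fun p q : Fin k × Fin n =>
        if p.1 = q.1 then (if p.1.1 % 2 = 0 then A (k - p.1.1) else (0 : Mat n)) p.2 q.2 else 0)
      + (Matrix.of fun p q : Fin k × Fin n =>
        if p.1.1 ≠ 0 ∧ q = (⟨s1fun p.1.1, s1fun_lt hk p.1.2⟩, p.2) then (1 : ℂ) else 0) := by
  obtain ⟨m, hm⟩ := hk
  ext ⟨⟨i, hi⟩, a⟩ ⟨⟨j, hj⟩, b⟩
  simp only [TT1, T1Block, Matrix.add_apply, Matrix.of_apply, Prod.mk.injEq, Fin.mk.injEq, ne_eq]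
  by_cases hij : i = j
  · subst hij
    have hs1 : ¬ (i = s1fun i) ∨ i = 0 := by unfold s1fun; split <;> omega
    by_cases h0 : i = 0
    · subst h0
      have : ¬ ((0:ℕ) = s1fun 0) ∨ True := Or.inr trivial
      simp [s1fun]
    · rcases hs1 with hs1 | hs1
      · simp [h0, hs1, if_pos rfl]
      · omega
  · by_cases hpar : i % 2 = 1
    · have hs1 : s1fun i = i + 1 := by unfold s1fun; simp [hpar]
      have hi0 : ¬ i = 0 := by omega
      have hcond : ((j = i + 1 ∧ i % 2 = 1) ∨ (i = j + 1 ∧ j % 2 = 1)) ↔ j = i + 1 := by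
        constructor
        · rintro (⟨h, -⟩ | ⟨h1, h2⟩) <;> omega
        · intro h; exact Or.inl ⟨h, hpar⟩
      simp only [hij, if_neg hij, hcond, hs1, hi0, not_false_iff, true_and]
      by_cases hja : j = i + 1 <;> by_cases hab : a = b <;>
        simp [hja, hab, Matrix.one_apply, eq_comm]
    · have hpar0 : i % 2 = 0 := by omega
      have hs1 : s1fun i = i - 1 := by unfold s1fun; simp [hpar]
      have hcond : ((j = i + 1 ∧ i % 2 = 1) ∨ (i = j + 1 ∧ j % 2 = 1)) ↔ (¬ i = 0 ∧ j = i - 1) := by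
        constructor
        · rintro (⟨h1, h2⟩ | ⟨h1, h2⟩) <;> omega
        · rintro ⟨h1, h2⟩; right; constructor <;> omega
      simp only [hij, if_neg hij, hcond, hs1]
      by_cases h0 : i = 0
      · simp [h0]
      · by_cases hji : j = i - 1 <;> by_cases hab : a = b <;>
          simp [h0, hji, hab, Matrix.one_apply, eq_comm]

lemma TT0_decomp {n k : ℕ} (hk : Odd k) (A : ℕ → Mat n) :
    TT0 k A = (Matrix.of fun p q : Fin k × Fin n =>
        if p.1 = q.1 then (if p.1.1 % 2 = 0 then -(A (k - p.1.1 - 1)) else (0 : Mat n)) p.2 q.2 else 0)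
      + (Matrix.of fun p q : Fin k × Fin n =>
        if p.1.1 + 1 ≠ k ∧ q = (⟨s0fun k p.1.1, s0fun_lt hk p.1.2⟩, p.2) then (1 : ℂ) else 0) := by
  obtain ⟨m, hm⟩ := hk
  ext ⟨⟨i, hi⟩, a⟩ ⟨⟨j, hj⟩, b⟩
  simp only [TT0, T0Block, Matrix.add_apply, Matrix.of_apply, Prod.mk.injEq, Fin.mk.injEq, ne_eq]
  by_cases hij : i = j
  · subst hij
    have hs0 : ¬ (i = s0fun k i) ∨ i + 1 = k := by unfold s0fun; split_ifs <;> omega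
    by_cases h0 : i + 1 = k
    · simp [h0]
    · rcases hs0 with hs0 | hs0
      · simp [h0, hs0, if_pos rfl]
      · omega
  · by_cases hpar : i % 2 = 0
    · have hik : ¬ (i + 1 = k) ∨ ¬ (j = i + 1) := by omega
      by_cases hik' : i + 1 = k
      · have hcond : ¬ ((j = i + 1 ∧ i % 2 = 0) ∨ (i = j + 1 ∧ j % 2 = 0)) := by
          rintro (⟨h1, h2⟩ | ⟨h1, h2⟩) <;> omega
        rw [if_neg hij, if_neg hcond]
        simp [hik', hij]
      · have hs0 : s0fun k i = i + 1 := by unfold s0fun; simp [hpar, hik']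
        have hcond : ((j = i + 1 ∧ i % 2 = 0) ∨ (i = j + 1 ∧ j % 2 = 0)) ↔ j = i + 1 := by
          constructor
          · rintro (⟨h1, h2⟩ | ⟨h1, h2⟩) <;> omega
          · intro h; exact Or.inl ⟨h, hpar⟩
        simp only [hij, if_neg hij, hcond, hs0, hik', not_false_iff, true_and]
        by_cases hja : j = i + 1 <;> by_cases hab : a = b <;>
          simp [hja, hab, Matrix.one_apply, eq_comm]
    · have hs0 : s0fun k i = i - 1 := by unfold s0fun; simp [hpar]
      have hik : ¬ (i + 1 = k) := by omega
      have hcond : ((j = i + 1 ∧ i % 2 = 0) ∨ (i = j + 1 ∧ j % 2 = 0)) ↔ j = i - 1 := by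
        constructor
        · rintro (⟨h1, h2⟩ | ⟨h1, h2⟩) <;> omega
        · intro h; right; constructor <;> omega
      simp only [hij, if_neg hij, hcond, hs0, hik, not_false_iff, true_and]
      by_cases hji : j = i - 1 <;> by_cases hab : a = b <;>
        simp [hji, hab, Matrix.one_apply, eq_comm]



lemma s1fun_inv (i : ℕ) : s1fun (s1fun i) = i := by
  unfold s1fun; split_ifs <;> omega

lemma s0fun_inv {k i : ℕ} (hi : i < k) : s0fun k (s0fun k i) = i := by
  unfold s0fun; split_ifs <;> omega

lemma specNorm_zero {ι κ : Type*} [Fintype ι] [Fintype κ] [DecidableEq κ] :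
    specNorm (0 : Matrix ι κ ℂ) = 0 := by
  unfold specNorm; rw [map_zero, map_zero, norm_zero]

lemma specNorm_neg' {ι κ : Type*} [Fintype ι] [Fintype κ] [DecidableEq κ] (M : Matrix ι κ ℂ) :
    specNorm (-M) = specNorm M := by
  unfold specNorm; rw [map_neg, map_neg, norm_neg]

lemma one_le_maxA1 {n k : ℕ} (A : ℕ → Mat n) : 1 ≤ maxA1 k A :=
  le_trans (le_max_left 1 (specNorm (A k)))
    (Finset.le_sup' (fun i => max 1 (specNorm (A i))) (Finset.self_mem_range_succ k))

lemma specNorm_le_maxA1 {n k i : ℕ} (A : ℕ → Mat n) (hi : i ≤ k) :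
    specNorm (A i) ≤ maxA1 k A :=
  le_trans (le_max_right _ _)
    (Finset.le_sup' (fun i => max 1 (specNorm (A i))) (by simp [Nat.lt_succ]; omega))

theorem stmt_10 {n k : ℕ} (hk : Odd k) (hk3 : 3 ≤ k) (A : ℕ → Mat n) (hAk : A k ≠ 0) :
    specNorm (TT1 k A) ≤ 2 * maxA1 k A ∧ specNorm (TT0 k A) ≤ 2 * maxA1 k A := by
  have h1le : 1 ≤ maxA1 k A := one_le_maxA1 A
  have h0le : (0:ℝ) ≤ maxA1 k A := le_trans zero_le_one h1le
  constructor
  · rw [TT1_decomp hk A]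
    refine le_trans (specNorm_add_le _ _) ?_
    have hD : specNorm (Matrix.of fun p q : Fin k × Fin n =>
        if p.1 = q.1 then (if p.1.1 % 2 = 0 then A (k - p.1.1) else (0 : Mat n)) p.2 q.2
        else 0) ≤ maxA1 k A := by
      refine blockDiag_bound (fun i : Fin k => if i.1 % 2 = 0 then A (k - i.1) else 0) h0le ?_
      intro i
      by_cases h : i.1 % 2 = 0
      · simpa [h] using specNorm_le_maxA1 (k := k) A (Nat.sub_le _ _)
      · simpa [h, specNorm_zero] using h0le
    have hE : specNorm (Matrix.of fun p q : Fin k × Fin n =>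
        if p.1.1 ≠ 0 ∧ q = (⟨s1fun p.1.1, s1fun_lt hk p.1.2⟩, p.2) then (1 : ℂ) else 0)
        ≤ 1 := by
      refine pperm_bound (fun p : Fin k × Fin n => (⟨s1fun p.1.1, s1fun_lt hk p.1.2⟩, p.2))
        ?_ (fun p => p.1.1 ≠ 0)
      refine Function.Involutive.bijective ?_
      intro p
      ext
      · exact s1fun_inv p.1.1
      · rfl
    linarith
  · rw [TT0_decomp hk A]
    refine le_trans (specNorm_add_le _ _) ?_
    have hD : specNorm (Matrix.of fun p q : Fin k × Fin n =>
        if p.1 = q.1 then (if p.1.1 % 2 = 0 then -(A (k - p.1.1 - 1)) else (0 : Mat n)) p.2 q.2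
        else 0) ≤ maxA1 k A := by
      refine blockDiag_bound (fun i : Fin k => if i.1 % 2 = 0 then -(A (k - i.1 - 1)) else 0)
        h0le ?_
      intro i
      by_cases h : i.1 % 2 = 0
      · simpa [h, specNorm_neg'] using specNorm_le_maxA1 (k := k) A (by omega)
      · simpa [h, specNorm_zero] using h0le
    have hE : specNorm (Matrix.of fun p q : Fin k × Fin n =>
        if p.1.1 + 1 ≠ k ∧ q = (⟨s0fun k p.1.1, s0fun_lt hk p.1.2⟩, p.2) then (1 : ℂ) else 0)
        ≤ 1 := by
      refine pperm_bound (fun p : Fin k × Fin n => (⟨s0fun k p.1.1, s0fun_lt hk p.1.2⟩, p.2))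
        ?_ (fun p => p.1.1 + 1 ≠ k)
      refine Function.Involutive.bijective ?_
      intro p
      ext
      · exact s0fun_inv p.1.2
      · rfl
    linarith


end MPoly
end
end
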